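/- Let A be a Noetherian commutative ring and let p₁ ⊊ p₂ be prime ideals of A such that the height of p₂/p₁ in A/p₁ is at least 2. Then there exist infinitely many prime ideals q of A with p₁ ⊊ q ⊊ p₂. -/

import Mathlib

open Ideal

section Artinian

variable {R : Type*} [CommRing R]

/-- A Noetherian module killed by a maximal ideal is Artinian. -/
lemma artinian_of_isMaximal_torsion {M : Type*} [AddCommGroup M] [Module R M]
    (m : Ideal R) (hm : m.IsMaximal) [IsNoetherian R M]
    (htor : Module.IsTorsionBySet R M (m : Set R)) : IsArtinian R M := by
  letI := htor.module
  haveI : IsScalarTower R (R ⧸ m) M := htor.isScalarTower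
  haveI : IsNoetherian (R ⧸ m) M := isNoetherian_of_tower R inferInstance
  letI := Ideal.Quotient.field m
  haveI : Module.Finite (R ⧸ m) M := Module.finite_def.mpr (IsNoetherian.noetherian ⊤)
  haveI : IsArtinian (R ⧸ m) M := isArtinian_of_fg_of_artinian'
  -- descend well-foundedness along the carrier-preserving map of submodules
  have key : ∀ N : Submodule R M, ∃ N' : Submodule (R ⧸ m) M, (N' : Set M) = (N : Set M) := by
    intro N
    refine ⟨⟨⟨⟨(N : Set M), ?_⟩, ?_⟩, ?_⟩, rfl⟩
    · intro a b ha hb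
      exact N.add_mem ha hb
    · exact N.zero_mem
    · intro c v hv
      obtain ⟨r, rfl⟩ := Ideal.Quotient.mk_surjective c
      show ((Ideal.Quotient.mk m r) • v) ∈ N
      rw [htor.mk_smul]
      exact N.smul_mem r hv
  choose g hg using key
  have hwf := (isArtinian_iff (R ⧸ m) M).mp inferInstance
  refine (isArtinian_iff R M).mpr ?_
  refine Subrelation.wf (r := InvImage (· < ·) g) ?_ (InvImage.wf g hwf)
  intro N₁ N₂ h
  show g N₁ < g N₂
  rw [lt_iff_le_and_ne] at h ⊢
  constructor
  · intro y hy
    have : y ∈ (g N₂ : Set M) := by rw [hg]; exact h.1 (by rwa [← SetLike.mem_coe, hg] at hy)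
    exact this
  · intro hEq
    apply h.2
    apply SetLike.coe_injective
    rw [← hg, ← hg, hEq]

/-- A Noetherian ring with a nilpotent maximal ideal is Artinian. -/
lemma isArtinianRing_of_maximal_pow_eq_bot [IsNoetherianRing R] (m : Ideal R)
    (hm : m.IsMaximal) (k : ℕ) (hk : m ^ k = ⊥) : IsArtinianRing R := by
  have key : ∀ i : ℕ, IsArtinian R (R ⧸ (m ^ i : Ideal R)) := by
    intro i
    induction i with
    | zero =>
      rw [pow_zero, Ideal.one_eq_top]
      haveI : Subsingleton (R ⧸ (⊤ : Ideal R)) := Submodule.Quotient.subsingleton_iff.mpr rfl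
      haveI : Finite (R ⧸ (⊤ : Ideal R)) := Finite.of_subsingleton
      infer_instance
    | succ i ih =>
      have hle : (m ^ (i + 1) : Ideal R) ≤ m ^ i := Ideal.pow_le_pow_right (by omega)
      set N : Submodule R (R ⧸ (m ^ (i + 1) : Ideal R)) :=
        Submodule.map (m ^ (i + 1) : Ideal R).mkQ (m ^ i : Ideal R) with hN
      haveI hNart : IsArtinian R N := by
        apply artinian_of_isMaximal_torsion m hm
        rintro ⟨v, hv⟩ r
        obtain ⟨t, ht, rfl⟩ := hv
        apply Subtype.ext
        show r.1 • (Submodule.mkQ _ t) = 0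
        rw [← map_smul]
        rw [Submodule.mkQ_apply, Submodule.Quotient.mk_eq_zero]
        have h3 : (t : R) * r.1 ∈ (m ^ i) * m := Ideal.mul_mem_mul ht r.2
        rw [← pow_succ m i] at h3
        rw [smul_eq_mul, mul_comm]
        exact h3
      haveI hQart : IsArtinian R ((R ⧸ (m ^ (i + 1) : Ideal R)) ⧸ N) :=
        (Submodule.quotientQuotientEquivQuotient (m ^ (i + 1) : Ideal R)
          (m ^ i) hle).isArtinian_iff.mpr ih
      exact isArtinian_of_range_eq_ker N.subtype N.mkQ
        (by rw [Submodule.range_subtype, Submodule.ker_mkQ])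
  have h := key k
  rw [hk] at h
  exact (Submodule.quotEquivOfEqBot (⊥ : Ideal R) rfl).isArtinian_iff.mp h

end Artinian

section PIT

variable {R : Type*} [CommRing R] [IsNoetherianRing R]

/-- Krull's principal ideal theorem, local form. -/
lemma pit_local [IsLocalRing R] (x : R)
    (hx : IsLocalRing.maximalIdeal R ∈ (Ideal.span {x}).minimalPrimes)
    {q q' : Ideal R} (hq : q.IsPrime) (hq' : q'.IsPrime)
    (h1 : q < IsLocalRing.maximalIdeal R) (h2 : q' < q) : False := by
  haveI := hq
  set m := IsLocalRing.maximalIdeal R with hm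
  have hxq : x ∉ q := by
    intro hxq
    exact h1.ne (le_antisymm h1.le
      (hx.2 ⟨hq, (span_singleton_le_iff_mem q).mpr hxq⟩ h1.le))
  have hrad : (Ideal.span {x}).radical = m := by
    rw [Ideal.radical_eq_sInf]
    apply le_antisymm (sInf_le (show m ∈ {J : Ideal R | Ideal.span {x} ≤ J ∧ J.IsPrime} from ⟨hx.1.2, hx.1.1⟩))
    apply le_sInf
    rintro J ⟨hJle, hJp⟩
    have hJm : J ≤ m := IsLocalRing.le_maximalIdeal hJp.ne_top
    exact hx.2 ⟨hJp, hJle⟩ hJm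
  obtain ⟨k, hk⟩ := Ideal.exists_radical_pow_le_of_fg (Ideal.span {x}) (IsNoetherian.noetherian _)
  rw [hrad] at hk
  -- the quotient ring R/(x) is Artinian
  set mk' := Ideal.Quotient.mk (Ideal.span {x}) with hmk
  set m' : Ideal (R ⧸ Ideal.span {x}) := m.map mk' with hm'
  have hm'max : m'.IsMaximal := by
    haveI : m.IsMaximal := IsLocalRing.maximalIdeal.isMaximal R
    rcases Ideal.map_eq_top_or_isMaximal_of_surjective mk' Ideal.Quotient.mk_surjective
      (IsLocalRing.maximalIdeal.isMaximal R) with h | h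
    · exfalso
      have : Ideal.comap mk' (Ideal.map mk' m) = ⊤ := by rw [h, Ideal.comap_top]
      rw [Ideal.comap_map_of_surjective mk' Ideal.Quotient.mk_surjective,
        ← RingHom.ker_eq_comap_bot, Ideal.mk_ker,
        sup_eq_left.mpr (hx.1.2.trans le_rfl)] at this
      exact (IsLocalRing.maximalIdeal.isMaximal R).ne_top this
    · exact h
  have hm'pow : m' ^ k = ⊥ := by
    rw [hm', ← Ideal.map_pow]
    rw [eq_bot_iff]
    calc Ideal.map mk' (m ^ k) ≤ Ideal.map mk' (Ideal.span {x}) := Ideal.map_mono hk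
      _ = ⊥ := Ideal.map_quotient_self _
  haveI : IsArtinianRing (R ⧸ Ideal.span {x}) :=
    isArtinianRing_of_maximal_pow_eq_bot m' hm'max k hm'pow
  -- symbolic powers of q
  set S := Localization.AtPrime q with hS
  set f := algebraMap R S with hf
  set Q : ℕ → Ideal R := fun n => Ideal.comap f (Ideal.map f (q ^ n)) with hQ
  have hQanti : ∀ n, Q (n + 1) ≤ Q n := fun n =>
    Ideal.comap_mono (Ideal.map_mono (Ideal.pow_le_pow_right (by omega)))
  obtain ⟨Nn, hNn⟩ := IsArtinian.monotone_stabilizes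
    (R := R ⧸ Ideal.span {x}) (M := R ⧸ Ideal.span {x}) (⟨fun n => (Q n).map mk', fun a b hab => by
      show (Q b).map mk' ≤ (Q a).map mk'
      exact Ideal.map_mono (Ideal.comap_mono (Ideal.map_mono
        (Ideal.pow_le_pow_right hab)))⟩ : ℕ →o (Ideal (R ⧸ Ideal.span {x}))ᵒᵈ)
  have hstep : (Q Nn).map mk' = (Q (Nn + 1)).map mk' := hNn (Nn + 1) (by omega)
  have hcomap : ∀ n, Ideal.comap mk' ((Q n).map mk') = Q n ⊔ Ideal.span {x} := by
    intro n
    rw [Ideal.comap_map_of_surjective mk' Ideal.Quotient.mk_surjective,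
      ← RingHom.ker_eq_comap_bot, Ideal.mk_ker]
  have heq : Q Nn ⊔ Ideal.span {x} = Q (Nn + 1) ⊔ Ideal.span {x} := by
    rw [← hcomap, ← hcomap, hstep]
  have hsub : Q Nn ≤ Q (Nn + 1) ⊔ (Ideal.span {x}) • Q Nn := by
    intro a ha
    have hmem : a ∈ Q (Nn + 1) ⊔ Ideal.span {x} := by
      rw [← heq]; exact Submodule.mem_sup_left ha
    obtain ⟨b, hb, z, hz, hba⟩ := Submodule.mem_sup.mp hmem
    obtain ⟨c, hc⟩ := Ideal.mem_span_singleton'.mp hz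
    have hcx : c * x ∈ Q Nn := by
      rw [hc]
      have : z = a - b := by rw [← hba]; ring
      rw [this]
      exact Submodule.sub_mem _ ha (hQanti Nn hb)
    have hcQ : c ∈ Q Nn := by
      have hxu : IsUnit (f x) := IsLocalization.map_units (M := q.primeCompl) S ⟨x, hxq⟩
      show f c ∈ Ideal.map f (q ^ Nn)
      have h1' : f (c * x) ∈ Ideal.map f (q ^ Nn) := hcx
      obtain ⟨u, hu⟩ := hxu
      have : f c = f (c * x) * (↑u⁻¹ : S) := by
        rw [_root_.map_mul, ← hu, mul_assoc, Units.mul_inv, mul_one]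
      rw [this]
      exact Ideal.mul_mem_right _ _ h1'
    have hz' : z ∈ (Ideal.span {x}) • Q Nn := by
      have hxc : x * c ∈ (Ideal.span {x}) * Q Nn :=
        Ideal.mul_mem_mul (Ideal.mem_span_singleton_self x) hcQ
      rw [smul_eq_mul, ← hc, mul_comm c x]
      exact hxc
    rw [← hba]
    exact Submodule.add_mem _ (Submodule.mem_sup_left hb) (Submodule.mem_sup_right hz')
  have hxm : Ideal.span {x} ≤ Ideal.jacobson ⊥ := by
    rw [IsLocalRing.jacobson_eq_maximalIdeal ⊥ bot_ne_top]
    exact hx.1.2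
  have hNak := Submodule.sup_eq_sup_smul_of_le_smul_of_le_jacobson
    (IsNoetherian.noetherian (Q Nn)) hxm hsub
  rw [Submodule.bot_smul, sup_bot_eq, sup_eq_right.mpr (hQanti Nn)] at hNak
  -- hNak : Q Nn = Q (Nn + 1)
  have hSeq : (q.map f) ^ Nn = (q.map f) ^ (Nn + 1) := by
    have h1' := congrArg (Ideal.map f) hNak
    rwa [hQ, IsLocalization.map_comap q.primeCompl S, IsLocalization.map_comap q.primeCompl S,
      Ideal.map_pow, Ideal.map_pow] at h1'
  haveI : IsNoetherianRing S := IsLocalization.isNoetherianRing q.primeCompl S inferInstance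
  have hjac : q.map f ≤ Ideal.jacobson ⊥ := by
    rw [IsLocalRing.jacobson_eq_maximalIdeal ⊥ bot_ne_top,
      ← Localization.AtPrime.map_eq_maximalIdeal]
  have hbot : (q.map f) ^ Nn = ⊥ := by
    apply Submodule.eq_bot_of_le_smul_of_le_jacobson_bot (q.map f) _ (IsNoetherian.noetherian _)
      _ hjac
    rw [smul_eq_mul]
    exact le_of_eq (hSeq.trans (by rw [pow_succ, mul_comm]))
  have hdisj' : Disjoint (q.primeCompl : Set R) (q' : Set R) := by
    rw [Set.disjoint_left]
    intro a hac ha'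
    exact hac (h2.le ha')
  have hdisj : Disjoint (q.primeCompl : Set R) (q : Set R) := by
    rw [Set.disjoint_left]
    intro a hac ha
    exact hac ha
  haveI hQ'p : (q'.map f).IsPrime :=
    IsLocalization.isPrime_of_isPrime_disjoint q.primeCompl S q' hq' hdisj'
  have hle : q.map f ≤ q'.map f := Ideal.IsPrime.le_of_pow_le (hbot ▸ bot_le)
  have : q ≤ q' := by
    have h1' := Ideal.comap_mono (f := f) hle
    rwa [(show Ideal.comap (algebraMap R S) (Ideal.map (algebraMap R S) q) = q from
        IsLocalization.comap_map_of_isPrime_disjoint q.primeCompl S hq hdisj),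
      (show Ideal.comap (algebraMap R S) (Ideal.map (algebraMap R S) q') = q' from
        IsLocalization.comap_map_of_isPrime_disjoint q.primeCompl S hq' hdisj')] at h1'
  exact absurd this h2.not_ge

/-- Krull's principal ideal theorem: a prime minimal over a principal ideal has height ≤ 1. -/
lemma pit (x : R) (p : Ideal R) (hp : p ∈ (Ideal.span {x}).minimalPrimes)
    {u v : Ideal R} (hu : u.IsPrime) (hv : v.IsPrime) (huv : u < v) (hvp : v < p) : False := by
  haveI hpp : p.IsPrime := hp.1.1
  set S := Localization.AtPrime p with hS
  set f := algebraMap R S with hf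
  haveI : IsNoetherianRing S := IsLocalization.isNoetherianRing p.primeCompl S inferInstance
  have hdisj : ∀ {w : Ideal R}, w ≤ p → Disjoint (p.primeCompl : Set R) (w : Set R) := by
    intro w hw
    rw [Set.disjoint_left]
    intro a hac ha
    exact hac (hw ha)
  have hmax : IsLocalRing.maximalIdeal S ∈ (Ideal.span {f x}).minimalPrimes := by
    constructor
    · refine ⟨(IsLocalRing.maximalIdeal.isMaximal S).isPrime, ?_⟩
      rw [span_singleton_le_iff_mem, ← Localization.AtPrime.map_eq_maximalIdeal]
      exact Ideal.mem_map_of_mem f (hp.1.2 (Ideal.mem_span_singleton_self x))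
    · rintro r ⟨hr, hxr⟩ hrm
      have hcom : Ideal.comap f r ≤ p := by
        have := Ideal.comap_mono (f := f) hrm
        rwa [← Localization.AtPrime.map_eq_maximalIdeal,
          (show Ideal.comap (algebraMap R S) (Ideal.map (algebraMap R S) p) = p from
        IsLocalization.comap_map_of_isPrime_disjoint p.primeCompl S hpp (hdisj le_rfl))]
          at this
      haveI := hr
      have hple : p ≤ Ideal.comap f r := by
        apply hp.2 ⟨Ideal.IsPrime.comap f, ?_⟩ hcom
        rw [span_singleton_le_iff_mem]
        exact hxr (Ideal.mem_span_singleton_self (f x))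
      calc IsLocalRing.maximalIdeal S = Ideal.map f p :=
            (Localization.AtPrime.map_eq_maximalIdeal).symm
        _ ≤ Ideal.map f (Ideal.comap f r) := Ideal.map_mono hple
        _ = r := IsLocalization.map_comap p.primeCompl S r
  have hmap_lt : ∀ {w w' : Ideal R}, w.IsPrime → w'.IsPrime → w ≤ p → w' ≤ p → w < w' →
      w.map f < w'.map f := by
    intro w w' hw hw' hwp hw'p hlt
    refine lt_of_le_of_ne (Ideal.map_mono hlt.le) ?_
    intro hEq
    apply hlt.ne
    have := congrArg (Ideal.comap f) hEq
    rwa [(show Ideal.comap (algebraMap R S) (Ideal.map (algebraMap R S) w) = w from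
        IsLocalization.comap_map_of_isPrime_disjoint p.primeCompl S hw (hdisj hwp)),
      (show Ideal.comap (algebraMap R S) (Ideal.map (algebraMap R S) w') = w' from
        IsLocalization.comap_map_of_isPrime_disjoint p.primeCompl S hw' (hdisj hw'p))] at this
  have h1 : v.map f < IsLocalRing.maximalIdeal S := by
    rw [← Localization.AtPrime.map_eq_maximalIdeal]
    exact hmap_lt hv hpp hvp.le le_rfl hvp
  have h2 : u.map f < v.map f := hmap_lt hu hv (huv.le.trans hvp.le) hvp.le huv
  exact pit_local (f x) hmax
    (IsLocalization.isPrime_of_isPrime_disjoint p.primeCompl S v hv (hdisj hvp.le))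
    (IsLocalization.isPrime_of_isPrime_disjoint p.primeCompl S u hu (hdisj (huv.le.trans hvp.le)))
    h1 h2

end PIT

lemma exists_chain_of_two_le_height {α : Type*} [Preorder α] {a : α}
    (h : 2 ≤ Order.height a) : ∃ u v : α, u < v ∧ v < a := by
  by_contra hc
  push_neg at hc
  have hle : Order.height a ≤ 1 := by
    rw [Order.height_le_iff]
    intro p hp
    by_contra hlen
    push_neg at hlen
    have h2 : 2 ≤ p.length := by
      by_contra h2
      push_neg at h2
      interval_cases hl : p.length <;> simp_all
    set n := p.length with hn
    have hu : p.toFun ⟨n - 2, by omega⟩ < p.toFun ⟨n - 1, by omega⟩ :=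
      p.strictMono (by simp [Fin.lt_def]; omega)
    have hv : p.toFun ⟨n - 1, by omega⟩ < p.toFun ⟨n, by omega⟩ :=
      p.strictMono (by simp [Fin.lt_def]; omega)
    have hlast : p.toFun ⟨n, by omega⟩ = p.last := rfl
    exact hc _ _ hu (lt_of_lt_of_le (hlast ▸ hv) hp)
  have : (2 : ℕ∞) ≤ 1 := h.trans hle
  norm_num at this

/-- Let `A` be a Noetherian commutative ring and let `p₁ ⊊ p₂` be prime ideals of `A` such that
the height of `p₂/p₁` (i.e. of the image of `p₂` in `A ⧸ p₁`) is at least `2`.  Then there are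
infinitely many prime ideals `q` of `A` with `p₁ ⊊ q ⊊ p₂`. -/
theorem stmt_7 {A : Type*} [CommRing A] [IsNoetherianRing A]
    (p₁ p₂ : Ideal A) (h₁ : p₁.IsPrime) (h₂ : p₂.IsPrime) (hlt : p₁ < p₂)
    (hP : (p₂.map (Ideal.Quotient.mk p₁)).IsPrime)
    (hht : 2 ≤ Order.height
      (⟨p₂.map (Ideal.Quotient.mk p₁), hP⟩ : PrimeSpectrum (A ⧸ p₁))) :
    {q : Ideal A | q.IsPrime ∧ p₁ < q ∧ q < p₂}.Infinite := by
  by_contra hfin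
  rw [Set.not_infinite] at hfin
  classical
  haveI := h₁
  haveI := h₂
  set mk := Ideal.Quotient.mk p₁ with hmk
  obtain ⟨U, V, hUV, hVP⟩ := exists_chain_of_two_le_height hht
  -- prime avoidance
  set T : Finset (Ideal A) := insert p₁ hfin.toFinset with hT
  have hpr : ∀ i ∈ T, i ≠ p₁ → i ≠ p₁ → (i : Ideal A).IsPrime := by
    intro i hi h1 _
    rcases Finset.mem_insert.mp hi with rfl | hiS
    · exact absurd rfl h1
    · exact (hfin.mem_toFinset.mp hiS).1
  have havoid : ¬ ((p₂ : Set A) ⊆ ⋃ i ∈ (T : Set (Ideal A)), ((i : Ideal A) : Set A)) := by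
    intro hsub
    obtain ⟨i, hiT, hle⟩ := (Ideal.subset_union_prime (f := fun i => i) p₁ p₁ hpr).mp hsub
    rcases Finset.mem_insert.mp hiT with rfl | hiS
    · exact hlt.not_ge hle
    · exact ((hfin.mem_toFinset.mp hiS).2.2).not_ge hle
  obtain ⟨x, hxp₂, hxnot⟩ := Set.not_subset.mp havoid
  have hxmem : ∀ i ∈ T, x ∉ (i : Set A) := by
    intro i hi hxi
    exact hxnot (Set.mem_biUnion (Finset.mem_coe.mpr hi) hxi)
  have hxp₁ : x ∉ p₁ := hxmem p₁ (Finset.mem_insert_self _ _)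
  have hxS : ∀ q : Ideal A, q.IsPrime → p₁ < q → q < p₂ → x ∉ q := by
    intro q hq hq1 hq2 hxq
    exact hxmem q (Finset.mem_insert_of_mem (hfin.mem_toFinset.mpr ⟨hq, hq1, hq2⟩)) hxq
  -- p₂ is minimal over p₁ ⊔ (x)
  have hmin : p₂ ∈ (p₁ ⊔ Ideal.span {x}).minimalPrimes := by
    obtain ⟨r, hr, hrle⟩ := Ideal.exists_minimalPrimes_le
      (I := p₁ ⊔ Ideal.span {x}) (J := p₂)
      (sup_le hlt.le ((span_singleton_le_iff_mem p₂).mpr hxp₂))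
    have hxr : x ∈ r := hr.1.2 (Submodule.mem_sup_right (Ideal.mem_span_singleton_self x))
    have hrp₂ : r = p₂ := by
      by_contra hne
      have hp₁r : p₁ < r :=
        lt_of_le_of_ne (le_sup_left.trans hr.1.2) (by rintro rfl; exact hxp₁ hxr)
      exact hxS r hr.1.1 hp₁r (lt_of_le_of_ne hrle hne) hxr
    rwa [hrp₂] at hr
  -- push to the quotient
  have hmin' : (p₂.map mk) ∈ (Ideal.span {mk x}).minimalPrimes := by
    have hkey : p₁ ⊔ Ideal.span {x} = Ideal.comap mk (Ideal.span {mk x}) := by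
      have : Ideal.span ({mk x} : Set (A ⧸ p₁)) = Ideal.map mk (Ideal.span {x}) := by
        rw [Ideal.map_span, Set.image_singleton]
      rw [this, Ideal.comap_map_of_surjective mk Ideal.Quotient.mk_surjective,
        ← RingHom.ker_eq_comap_bot, Ideal.mk_ker, sup_comm]
    rw [hkey, Ideal.comap_minimalPrimes_eq_of_surjective Ideal.Quotient.mk_surjective] at hmin
    obtain ⟨r, hr, hre⟩ := hmin
    have : p₂.map mk = r := by
      rw [← hre, Ideal.map_comap_of_surjective mk Ideal.Quotient.mk_surjective]
    rwa [this]
  exact pit (mk x) (p₂.map mk) hmin' U.2 V.2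
    ((PrimeSpectrum.asIdeal_lt_asIdeal U V).mpr hUV)
    ((PrimeSpectrum.asIdeal_lt_asIdeal V ⟨p₂.map mk, hP⟩).mpr hVP)
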